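/- Let S(V) be a right-handed cofree cocommutative Hopf algebra with product ∗ and let π denote the projection of ∗ onto V. For primitive elements a, b ∈ V, one has a∗b = π(a⊗b) + ab, where ab denotes the symmetric product (polynomial product) in S^2(V). -/

import Mathlib

open TensorProduct MvPolynomial

/-- The unshuffle coproduct on the polynomial (symmetric) coalgebra `S(V) = K[X_i]`:
the algebra map (for the polynomial product) determined by making each variable primitive. -/
noncomputable def unshuffle (K : Type*) (σ : Type*) [CommRing K] :
    MvPolynomial σ K →ₐ[K] MvPolynomial σ K ⊗[K] MvPolynomial σ K :=
  MvPolynomial.aeval (fun i : σ =>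
    (X i ⊗ₜ[K] 1 + 1 ⊗ₜ[K] X i : MvPolynomial σ K ⊗[K] MvPolynomial σ K))

/-- The counit of the polynomial coalgebra: the projection on `S^0(V) = K`. -/
noncomputable def polyCounit (K : Type*) (σ : Type*) [CommRing K] :
    MvPolynomial σ K →ₐ[K] K :=
  MvPolynomial.aeval (fun _ : σ => (0 : K))

section Aux
variable {K σ : Type*} [Field K] [CharZero K]

lemma weight_one_single {d : σ →₀ ℕ} (h : Finsupp.weight (1 : σ → ℕ) d = 1) :
    ∃ i, d = Finsupp.single i 1 := by
  classical
  have hsum : ∑ j ∈ d.support, d j = 1 := by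
    simpa [Finsupp.weight_apply, Finsupp.sum, smul_eq_mul] using h
  have hne : d.support.Nonempty := by
    rcases d.support.eq_empty_or_nonempty with he | hne
    · rw [he] at hsum; simp at hsum
    · exact hne
  obtain ⟨i, hi⟩ := hne
  have hle : d i ≤ 1 := hsum ▸ Finset.single_le_sum (fun _ _ => Nat.zero_le _) hi
  have hdi : d i = 1 := le_antisymm hle (Nat.one_le_iff_ne_zero.2 (Finsupp.mem_support_iff.1 hi))
  refine ⟨i, ?_⟩
  ext j
  rcases eq_or_ne j i with rfl | hj
  · simp [hdi]
  · rw [Finsupp.single_apply, if_neg (by exact fun hh => hj hh.symm)]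
    by_contra hdj
    have hji : j ∈ d.support := Finsupp.mem_support_iff.2 hdj
    have hsub : ({i, j} : Finset σ) ⊆ d.support := by
      intro k hk; simp at hk; rcases hk with rfl | rfl <;> assumption
    have h2 : d i + d j ≤ ∑ k ∈ d.support, d k := by
      have := Finset.sum_le_sum_of_subset hsub (f := fun k => d k)
      simpa [Finset.sum_pair (fun hh => hj hh.symm : i ≠ j)] using this
    omega

lemma unshuffle_of_deg_one {a : MvPolynomial σ K} (ha : a ∈ homogeneousSubmodule σ K 1) :
    unshuffle K σ a = a ⊗ₜ[K] 1 + 1 ⊗ₜ[K] a := by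
  have hspan : a ∈ Submodule.span K (Set.range (X : σ → MvPolynomial σ K)) := by
    rw [mem_homogeneousSubmodule] at ha
    rw [MvPolynomial.as_sum a]
    refine Submodule.sum_mem _ fun d hd => ?_
    obtain ⟨i, rfl⟩ := weight_one_single (ha (MvPolynomial.mem_support_iff.1 hd))
    have : (monomial (Finsupp.single i 1)) (coeff (Finsupp.single i 1) a)
        = coeff (Finsupp.single i 1) a • X i := by
      rw [MvPolynomial.X, MvPolynomial.smul_monomial, smul_eq_mul, mul_one]
    rw [this]
    exact Submodule.smul_mem _ _ (Submodule.subset_span ⟨i, rfl⟩)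
  refine Submodule.span_induction (p := fun p _ =>
      unshuffle K σ p = p ⊗ₜ[K] 1 + 1 ⊗ₜ[K] p) ?_ ?_ ?_ ?_ hspan
  · rintro x ⟨i, rfl⟩
    simp [unshuffle]
  · simp
  · intro x y _ _ hx hy
    simp [map_add, hx, hy, add_tmul, tmul_add]; abel
  · intro c x _ hx
    simp [map_smul, hx, smul_add, TensorProduct.smul_tmul', TensorProduct.tmul_smul]

lemma coeff_aeval_double (p : MvPolynomial σ K) (d : σ →₀ ℕ) :
    coeff d ((aeval fun i => (X i + X i : MvPolynomial σ K)) p)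
      = 2 ^ (Finsupp.weight (1 : σ → ℕ) d) * coeff d p := by
  classical
  induction p using MvPolynomial.induction_on' with
  | add p q hp hq => simp only [map_add, coeff_add, hp, hq, mul_add]
  | monomial u c =>
    have hx : ∀ (i : σ) (k : ℕ), (X i + X i : MvPolynomial σ K) ^ k
        = C ((2 : K) ^ k) * X i ^ k := by
      intro i k
      rw [← two_mul, mul_pow, map_pow]
      congr 1
    have key : (aeval fun i => (X i + X i : MvPolynomial σ K)) (monomial u c)
        = C ((2 : K) ^ (Finsupp.weight (1 : σ → ℕ) u)) * monomial u c := by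
      rw [aeval_monomial]
      have : (u.prod fun i k => (X i + X i : MvPolynomial σ K) ^ k)
          = C ((2 : K) ^ (Finsupp.weight (1 : σ → ℕ) u))
            * u.prod fun i k => (X i : MvPolynomial σ K) ^ k := by
        rw [Finsupp.prod]
        simp only [hx]
        rw [Finset.prod_mul_distrib, ← map_prod, Finset.prod_pow_eq_pow_sum]
        rw [Finsupp.prod]
        congr 2
        simp [Finsupp.weight_apply, Finsupp.sum, smul_eq_mul]
      rw [this, monomial_eq, algebraMap_eq]
      ring
    rw [key, coeff_C_mul]
    by_cases h : u = d
    · subst h; ring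
    · simp [coeff_monomial, Ne.symm h, h]

end Aux

set_option synthInstance.maxHeartbeats 1000000 in
set_option maxHeartbeats 1000000 in
/-- Let `S(V)` (realized as the symmetric coalgebra `K[X_i]` with the unshuffle coproduct)
be a right-handed cofree cocommutative Hopf algebra with product `∗ = m`, and let `π` denote
the projection of `∗` onto `V` (the degree-one homogeneous component).  For primitive elements
`a, b ∈ V` one has `a ∗ b = π(a⊗b) + ab`, where `ab` is the symmetric (polynomial) product
in `S²(V)`. -/
theorem rightHanded_product_on_primitives {K σ : Type*} [Field K] [CharZero K]
    (m : MvPolynomial σ K →ₗ[K] MvPolynomial σ K →ₗ[K] MvPolynomial σ K)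
    (hone : ∀ x : MvPolynomial σ K, m 1 x = x ∧ m x 1 = x)
    (hassoc : ∀ x y z : MvPolynomial σ K, m (m x y) z = m x (m y z))
    (hcomul : ∀ x y : MvPolynomial σ K,
      unshuffle K σ (m x y) =
        TensorProduct.map (TensorProduct.lift m) (TensorProduct.lift m)
          (TensorProduct.tensorTensorTensorComm K (MvPolynomial σ K) (MvPolynomial σ K)
              (MvPolynomial σ K) (MvPolynomial σ K)
            (unshuffle K σ x ⊗ₜ[K] unshuffle K σ y)))
    (hcounit : ∀ x y : MvPolynomial σ K,
      polyCounit K σ (m x y) = polyCounit K σ x * polyCounit K σ y)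
    (hrh : ∀ (n k : ℕ) (x y : MvPolynomial σ K), 2 ≤ n →
      x ∈ homogeneousSubmodule σ K n → y ∈ homogeneousSubmodule σ K k →
      homogeneousComponent 0 (m x y) = 0 ∧ homogeneousComponent 1 (m x y) = 0) :
    ∀ a b : MvPolynomial σ K,
      a ∈ homogeneousSubmodule σ K 1 → b ∈ homogeneousSubmodule σ K 1 →
      m a b = homogeneousComponent 1 (m a b) + a * b := by
  intro a b ha hb
  have h1 : ∀ x : MvPolynomial σ K, m 1 x = x := fun x => (hone x).1
  have h1' : ∀ x : MvPolynomial σ K, m x 1 = x := fun x => (hone x).2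
  set q : MvPolynomial σ K := m a b - a * b with hqdef
  have hΔa := unshuffle_of_deg_one ha
  have hΔb := unshuffle_of_deg_one hb
  have hΔm : unshuffle K σ (m a b)
      = (m a b) ⊗ₜ[K] 1 + 1 ⊗ₜ[K] (m a b) + (a ⊗ₜ[K] b + b ⊗ₜ[K] a) := by
    rw [hcomul a b, hΔa, hΔb]
    simp only [tmul_add, add_tmul, map_add,
      TensorProduct.tensorTensorTensorComm_tmul, TensorProduct.map_tmul,
      TensorProduct.lift.tmul, h1, h1']
    abel
  have hΔab : unshuffle K σ (a * b)
      = (a * b) ⊗ₜ[K] 1 + 1 ⊗ₜ[K] (a * b) + (a ⊗ₜ[K] b + b ⊗ₜ[K] a) := by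
    rw [map_mul, hΔa, hΔb]
    simp only [add_mul, mul_add, Algebra.TensorProduct.tmul_mul_tmul, one_mul, mul_one]
    abel
  have hΔq : unshuffle K σ q = q ⊗ₜ[K] 1 + 1 ⊗ₜ[K] q := by
    rw [hqdef, map_sub, hΔm, hΔab, sub_tmul, tmul_sub]
    abel
  have hdouble : (aeval fun i => (X i + X i : MvPolynomial σ K)) q = q + q := by
    have := congrArg (Algebra.TensorProduct.lmul' (S := MvPolynomial σ K) K) hΔq
    rw [show unshuffle K σ q = (aeval fun i : σ =>
        (X i ⊗ₜ[K] 1 + 1 ⊗ₜ[K] X i : MvPolynomial σ K ⊗[K] MvPolynomial σ K)) q from rfl,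
      MvPolynomial.comp_aeval_apply] at this
    simpa [Algebra.TensorProduct.lmul'_apply_tmul] using this
  have hqcoeff : ∀ d : σ →₀ ℕ, Finsupp.weight (1 : σ → ℕ) d ≠ 1 → coeff d q = 0 := by
    intro d hd
    have e1 : (2 : K) ^ (Finsupp.weight (1 : σ → ℕ) d) * coeff d q = 2 * coeff d q := by
      rw [← coeff_aeval_double q d, hdouble, coeff_add, two_mul]
    have hne : ((2 : K) ^ (Finsupp.weight (1 : σ → ℕ) d) : K) ≠ 2 := by
      intro hc
      apply hd
      have : ((2 ^ (Finsupp.weight (1 : σ → ℕ) d) : ℕ) : K) = ((2 : ℕ) : K) := by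
        push_cast; exact hc
      have h2 : (2 : ℕ) ^ (Finsupp.weight (1 : σ → ℕ) d) = 2 ^ 1 := by
        simpa using Nat.cast_injective this
      exact Nat.pow_right_injective le_rfl h2
    by_contra hc
    exact hne (mul_right_cancel₀ hc e1)
  have hqmem : q ∈ homogeneousSubmodule σ K 1 := by
    rw [mem_homogeneousSubmodule]
    intro d hd
    by_contra h
    exact hd (hqcoeff d h)
  have habmem : a * b ∈ homogeneousSubmodule σ K 2 := by
    rw [mem_homogeneousSubmodule]
    exact ((mem_homogeneousSubmodule _ _).1 ha).mul ((mem_homogeneousSubmodule _ _).1 hb)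
  have hmab : m a b = q + a * b := by rw [hqdef]; ring
  rw [hmab, map_add, homogeneousComponent_of_mem hqmem, homogeneousComponent_of_mem habmem]
  norm_num
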